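/- For m ≥ 1 and n ≥ 1, the complete (n+1)-partite graph K_{1(n),m} has exactly 2^{m+n} − 2^m + m nonempty vertex subsets that induce a connected subgraph. -/

import Mathlib

/-- The join `H₀ ∨ H₁` of two graphs: all edges of `H₀`, all edges of `H₁`, and all
pairs with one endpoint in each. -/
def graphJoin {α β : Type*} (G : SimpleGraph α) (H : SimpleGraph β) :
    SimpleGraph (α ⊕ β) where
  Adj x y :=
    match x, y with
    | Sum.inl a, Sum.inl b => G.Adj a b
    | Sum.inr a, Sum.inr b => H.Adj a b
    | Sum.inl _, Sum.inr _ => True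
    | Sum.inr _, Sum.inl _ => True
  symm := by
    constructor
    rintro (a | a) (b | b) h
    · exact G.symm.symm _ _ h
    · trivial
    · trivial
    · exact H.symm.symm _ _ h
  loopless := by
    constructor
    rintro (a | a) h
    · exact G.loopless.irrefl a h
    · exact H.loopless.irrefl a h

/-- A coloring `f : V(G) → ℕ` (positive-valued) is an IC-coloring if every integer
`k` with `1 ≤ k ≤ f(G)` is the `f`-sum of some nonempty vertex subset inducing a
connected subgraph. -/
def IsICColoring {α : Type*} [Fintype α] (G : SimpleGraph α) (f : α → ℕ) : Prop :=
  (∀ v, 0 < f v) ∧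
    ∀ k : ℕ, 1 ≤ k → k ≤ ∑ v, f v →
      ∃ S : Finset α, S.Nonempty ∧ (G.induce (S : Set α)).Connected ∧
        ∑ v ∈ S, f v = k

/-- The IC-index `M(G)`: the maximum of `f(G)` over all IC-colorings `f` of `G`. -/
noncomputable def ICIndex {α : Type*} [Fintype α] (G : SimpleGraph α) : ℕ :=
  sSup {t | ∃ f : α → ℕ, IsICColoring G f ∧ ∑ v, f v = t}

/-- `K_{1(n),m} = O_m ∨ K_n`: the complete `(n+1)`-partite graph with `n` parts of
size one and one part (`V₀ = Fin m`, the left summand) of size `m`. -/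
def K1nm (m n : ℕ) : SimpleGraph (Fin m ⊕ Fin n) :=
  graphJoin (⊥ : SimpleGraph (Fin m)) (⊤ : SimpleGraph (Fin n))

lemma connected_of_inr {m n : ℕ} (S : Finset (Fin m ⊕ Fin n)) (b : Fin n)
    (hb : Sum.inr b ∈ S) :
    ((K1nm m n).induce (S : Set (Fin m ⊕ Fin n))).Connected := by
  rw [SimpleGraph.connected_iff]
  have hb' : (Sum.inr b : Fin m ⊕ Fin n) ∈ (S : Set (Fin m ⊕ Fin n)) := by simpa using hb
  refine ⟨?_, ⟨⟨Sum.inr b, hb'⟩⟩⟩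
  have key : ∀ x : (S : Set (Fin m ⊕ Fin n)),
      ((K1nm m n).induce (S : Set (Fin m ⊕ Fin n))).Reachable x ⟨Sum.inr b, hb'⟩ := by
    rintro ⟨(a | b'), hx⟩
    · exact SimpleGraph.Adj.reachable trivial
    · by_cases h : b' = b
      · subst h
        exact SimpleGraph.Reachable.refl _
      · exact SimpleGraph.Adj.reachable h
  intro x y
  exact (key x).trans (key y).symm

lemma connected_singleton {m n : ℕ} (x : Fin m ⊕ Fin n) :
    ((K1nm m n).induce (({x} : Finset (Fin m ⊕ Fin n)) : Set (Fin m ⊕ Fin n))).Connected := by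
  rw [SimpleGraph.connected_iff]
  refine ⟨?_, ⟨⟨x, by simp⟩⟩⟩
  rintro ⟨u, hu⟩ ⟨v, hv⟩
  simp only [Finset.coe_singleton, Set.mem_singleton_iff] at hu hv
  subst hu; subst hv
  exact SimpleGraph.Reachable.refl _

lemma isLeft_of_not_isRight {m n : ℕ} (x : Fin m ⊕ Fin n) (h : ¬ x.isRight = true) :
    ∃ a : Fin m, x = Sum.inl a := by
  cases x with
  | inl a => exact ⟨a, rfl⟩
  | inr b => simp at h

lemma left_singleton {m n : ℕ} (S : Finset (Fin m ⊕ Fin n))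
    (hL : ∀ x ∈ S, ¬ x.isRight = true) (hS : S.Nonempty)
    (hc : ((K1nm m n).induce (S : Set (Fin m ⊕ Fin n))).Connected) :
    ∃ a : Fin m, S = {Sum.inl a} := by
  have hbot : ((K1nm m n).induce (S : Set (Fin m ⊕ Fin n))) = ⊥ := by
    ext ⟨u, hu⟩ ⟨v, hv⟩
    simp only [SimpleGraph.bot_adj, iff_false]
    intro h
    obtain ⟨au, hau⟩ := isLeft_of_not_isRight u (hL u (by simpa using hu))
    obtain ⟨av, hav⟩ := isLeft_of_not_isRight v (hL v (by simpa using hv))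
    subst hau; subst hav
    exact h
  obtain ⟨x, hx⟩ := hS
  obtain ⟨a, rfl⟩ := isLeft_of_not_isRight x (hL x hx)
  refine ⟨a, ?_⟩
  ext y
  simp only [Finset.mem_singleton]
  constructor
  · intro hy
    have hr := hc.preconnected ⟨y, by simpa using hy⟩ ⟨Sum.inl a, by simpa using hx⟩
    rw [hbot] at hr
    have := SimpleGraph.reachable_bot.mp hr
    exact Subtype.ext_iff.mp this
  · rintro rfl; exact hx


/-- For `m ≥ 1` and `n ≥ 1`, the graph `K_{1(n),m}` has exactly
`2^{m+n} − 2^m + m` nonempty vertex subsets inducing a connected subgraph. -/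
theorem stmt_9 (m n : ℕ) (hm : 1 ≤ m) (hn : 1 ≤ n) :
    {S : Finset (Fin m ⊕ Fin n) |
        S.Nonempty ∧ ((K1nm m n).induce (S : Set (Fin m ⊕ Fin n))).Connected}.ncard =
      2 ^ (m + n) - 2 ^ m + m := by
  classical
  set F1 : Finset (Finset (Fin m ⊕ Fin n)) :=
    Finset.univ.filter (fun S => ∃ x ∈ S, x.isRight = true) with hF1
  set F2 : Finset (Finset (Fin m ⊕ Fin n)) :=
    Finset.univ.filter (fun S => ∃ a : Fin m, S = {Sum.inl a}) with hF2
  have hset : {S : Finset (Fin m ⊕ Fin n) |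
        S.Nonempty ∧ ((K1nm m n).induce (S : Set (Fin m ⊕ Fin n))).Connected}
      = ((F1 ∪ F2 : Finset (Finset (Fin m ⊕ Fin n))) : Set (Finset (Fin m ⊕ Fin n))) := by
    ext S
    simp only [Set.mem_setOf_eq, Finset.coe_union, Set.mem_union, Finset.mem_coe,
      hF1, hF2, Finset.mem_filter, Finset.mem_univ, true_and]
    constructor
    · rintro ⟨hne, hc⟩
      by_cases h : ∃ x ∈ S, x.isRight = true
      · exact Or.inl h
      · push_neg at h
        exact Or.inr (left_singleton S h hne hc)
    · rintro (⟨x, hx, hr⟩ | ⟨a, rfl⟩)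
      · obtain ⟨b, rfl⟩ := Sum.isRight_iff.mp hr
        exact ⟨⟨_, hx⟩, connected_of_inr S b hx⟩
      · exact ⟨⟨_, Finset.mem_singleton_self _⟩, connected_singleton _⟩
  rw [hset, Set.ncard_coe_finset]
  have hdisj : Disjoint F1 F2 := by
    rw [Finset.disjoint_left]
    rintro S h1 h2
    simp only [hF1, hF2, Finset.mem_filter, Finset.mem_univ, true_and] at h1 h2
    obtain ⟨a, rfl⟩ := h2
    obtain ⟨x, hx, hr⟩ := h1
    rw [Finset.mem_singleton] at hx
    subst hx
    simp at hr
  rw [Finset.card_union_of_disjoint hdisj]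
  have hc2 : F2.card = m := by
    have : F2 = Finset.univ.image (fun a : Fin m => ({Sum.inl a} : Finset (Fin m ⊕ Fin n))) := by
      ext S
      simp [hF2, eq_comm]
    rw [this, Finset.card_image_of_injective _ (fun a b h => by
      have := Finset.singleton_injective h
      exact Sum.inl_injective this)]
    simp
  have hc1 : F1.card = 2 ^ (m + n) - 2 ^ m := by
    have htot := Finset.card_filter_add_card_filter_not
      (s := (Finset.univ : Finset (Finset (Fin m ⊕ Fin n))))
      (p := fun S => ∃ x ∈ S, x.isRight = true)
    set L : Finset (Fin m ⊕ Fin n) := Finset.univ.filter (fun x => ¬ x.isRight = true) with hL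
    have hneg : Finset.univ.filter (fun S : Finset (Fin m ⊕ Fin n) =>
        ¬ ∃ x ∈ S, x.isRight = true) = L.powerset := by
      ext S
      simp only [Finset.mem_filter, Finset.mem_univ, true_and, Finset.mem_powerset,
        not_exists, not_and, hL, Finset.subset_iff]
    have hLcard : L.card = m := by
      have : L = Finset.univ.map ⟨Sum.inl, Sum.inl_injective⟩ := by
        ext x
        cases x <;> simp [hL]
      rw [this, Finset.card_map, Finset.card_univ, Fintype.card_fin]
    have huniv : (Finset.univ : Finset (Finset (Fin m ⊕ Fin n))).card = 2 ^ (m + n) := by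
      rw [Finset.card_univ, Fintype.card_finset]
      simp
    rw [hneg, Finset.card_powerset, hLcard, huniv] at htot
    rw [hF1]
    omega
  rw [hc1, hc2]
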